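/- Let M ⊆ B(H,K) be a closed TRO such that the C*-algebra [M M*] is unital with unit I_K, and set A := [M* M]. Let J₁, J₂ ⊆ B(H) be norm-closed subspaces satisfying [A Jᵢ A] = Jᵢ for i = 1, 2. Then [M (J₁ ∩ J₂) M*] = [M J₁ M*] ∩ [M J₂ M*], where [·] denotes closed linear span of the set of all indicated products. -/

import Mathlib

open ContinuousLinearMap

/-- The set of products `a ∘L b` with `a ∈ A`, `b ∈ B`. -/
def opMulSet {H K L : Type*} [NormedAddCommGroup H] [NormedSpace ℂ H]
    [NormedAddCommGroup K] [NormedSpace ℂ K] [NormedAddCommGroup L] [NormedSpace ℂ L]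
    (A : Set (K →L[ℂ] L)) (B : Set (H →L[ℂ] K)) : Set (H →L[ℂ] L) :=
  {x | ∃ a ∈ A, ∃ b ∈ B, x = a ∘L b}

/-- The set of adjoints of elements of `M`. -/
noncomputable def opAdjSet {H K : Type*}
    [NormedAddCommGroup H] [InnerProductSpace ℂ H] [CompleteSpace H]
    [NormedAddCommGroup K] [InnerProductSpace ℂ K] [CompleteSpace K]
    (M : Set (H →L[ℂ] K)) : Set (K →L[ℂ] H) :=
  {x | ∃ m ∈ M, x = adjoint m}

/-- Closed linear span. -/
def cSpan {E : Type*} [NormedAddCommGroup E] [NormedSpace ℂ E] (s : Set E) : Set E :=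
  closure ((Submodule.span ℂ s : Submodule ℂ E) : Set E)

section helpers

variable {E F : Type*} [NormedAddCommGroup E] [NormedSpace ℂ E]
  [NormedAddCommGroup F] [NormedSpace ℂ F]

lemma subset_cSpan (s : Set E) : s ⊆ cSpan s :=
  fun _ hx => subset_closure (Submodule.subset_span hx)

lemma cSpan_mono {s t : Set E} (h : s ⊆ t) : cSpan s ⊆ cSpan t :=
  closure_mono (fun _ hx => Submodule.span_mono h hx)

lemma map_cSpan (f : E →L[ℂ] F) {s : Set E} {t : Set F}
    (h : ∀ x ∈ s, f x ∈ cSpan t) : ∀ x ∈ cSpan s, f x ∈ cSpan t := by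
  intro x hx
  have hTc : ((Submodule.span ℂ t).topologicalClosure : Set F) = cSpan t :=
    Submodule.topologicalClosure_coe _
  have h1 : (Submodule.span ℂ s : Set E) ⊆
      f ⁻¹' ((Submodule.span ℂ t).topologicalClosure : Set F) := by
    have hle : Submodule.span ℂ s ≤
        (Submodule.span ℂ t).topologicalClosure.comap (f : E →ₗ[ℂ] F) := by
      rw [Submodule.span_le]
      intro y hy
      simp only [SetLike.mem_coe, Submodule.mem_comap]
      show f y ∈ (Submodule.span ℂ t).topologicalClosure
      rw [← SetLike.mem_coe, hTc]
      exact h y hy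
    intro y hy
    exact hle hy
  have h2 : IsClosed (f ⁻¹' ((Submodule.span ℂ t).topologicalClosure : Set F)) :=
    (Submodule.isClosed_topologicalClosure _).preimage f.continuous
  have h3 := closure_minimal h1 h2 hx
  rw [← hTc]
  exact h3

end helpers

/-- For a closed TRO `M` with `[M M*]` unital, `A = [M* M]`, and closed subspaces
`J₁, J₂` with `[A Jᵢ A] = Jᵢ`, one has `[M (J₁ ∩ J₂) M*] = [M J₁ M*] ∩ [M J₂ M*]`. -/
theorem stmt_7 {H K : Type*} [NormedAddCommGroup H] [InnerProductSpace ℂ H] [CompleteSpace H]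
    [NormedAddCommGroup K] [InnerProductSpace ℂ K] [CompleteSpace K]
    (M : Submodule ℂ (H →L[ℂ] K)) (hMc : IsClosed (M : Set (H →L[ℂ] K)))
    (hTRO : ∀ a ∈ M, ∀ b ∈ M, ∀ c ∈ M, a ∘L adjoint b ∘L c ∈ M)
    (hunit : (1 : K →L[ℂ] K) ∈
      cSpan (opMulSet (M : Set (H →L[ℂ] K)) (opAdjSet (M : Set (H →L[ℂ] K)))))
    (A : Set (H →L[ℂ] H))
    (hA : A = cSpan (opMulSet (opAdjSet (M : Set (H →L[ℂ] K))) (M : Set (H →L[ℂ] K))))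
    (J₁ J₂ : Submodule ℂ (H →L[ℂ] H))
    (hJ₁c : IsClosed (J₁ : Set (H →L[ℂ] H))) (hJ₂c : IsClosed (J₂ : Set (H →L[ℂ] H)))
    (hJ₁ : cSpan (opMulSet A (opMulSet (J₁ : Set (H →L[ℂ] H)) A)) = (J₁ : Set (H →L[ℂ] H)))
    (hJ₂ : cSpan (opMulSet A (opMulSet (J₂ : Set (H →L[ℂ] H)) A)) = (J₂ : Set (H →L[ℂ] H))) :
    cSpan (opMulSet (M : Set (H →L[ℂ] K))
        (opMulSet ((J₁ : Set (H →L[ℂ] H)) ∩ (J₂ : Set (H →L[ℂ] H)))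
          (opAdjSet (M : Set (H →L[ℂ] K)))))
      = cSpan (opMulSet (M : Set (H →L[ℂ] K))
          (opMulSet (J₁ : Set (H →L[ℂ] H)) (opAdjSet (M : Set (H →L[ℂ] K)))))
        ∩ cSpan (opMulSet (M : Set (H →L[ℂ] K))
          (opMulSet (J₂ : Set (H →L[ℂ] H)) (opAdjSet (M : Set (H →L[ℂ] K))))) := by
  have hmono : ∀ (Jset : Set (H →L[ℂ] H)),
      ((J₁ : Set (H →L[ℂ] H)) ∩ (J₂ : Set (H →L[ℂ] H))) ⊆ Jset →
      opMulSet (M : Set (H →L[ℂ] K))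
          (opMulSet ((J₁ : Set (H →L[ℂ] H)) ∩ (J₂ : Set (H →L[ℂ] H)))
            (opAdjSet (M : Set (H →L[ℂ] K)))) ⊆
        opMulSet (M : Set (H →L[ℂ] K)) (opMulSet Jset (opAdjSet (M : Set (H →L[ℂ] K)))) := by
    rintro Jset hJ y ⟨a, ha, b, ⟨j, hj, c, hc, rfl⟩, rfl⟩
    exact ⟨a, ha, _, ⟨j, hJ hj, c, hc, rfl⟩, rfl⟩
  apply Set.Subset.antisymm
  · apply Set.subset_inter
    · exact cSpan_mono (hmono _ Set.inter_subset_left)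
    · exact cSpan_mono (hmono _ Set.inter_subset_right)
  · rintro x ⟨hx1, hx2⟩
    have key : ∀ (J : Submodule ℂ (H →L[ℂ] H)),
        cSpan (opMulSet A (opMulSet (J : Set (H →L[ℂ] H)) A)) = (J : Set (H →L[ℂ] H)) →
        x ∈ cSpan (opMulSet (M : Set (H →L[ℂ] K))
          (opMulSet (J : Set (H →L[ℂ] H)) (opAdjSet (M : Set (H →L[ℂ] K))))) →
        ∀ m ∈ M, ∀ n ∈ M, adjoint m ∘L (x ∘L n) ∈ J := by
      intro J hJ hx m hm n hn
      have hsub : ∀ y ∈ opMulSet (M : Set (H →L[ℂ] K))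
          (opMulSet (J : Set (H →L[ℂ] H)) (opAdjSet (M : Set (H →L[ℂ] K)))),
          ((compL ℂ H K H (adjoint m)).comp ((compL ℂ H K K).flip n)) y ∈
            cSpan (opMulSet A (opMulSet (J : Set (H →L[ℂ] H)) A)) := by
        rintro y ⟨m₁, hm₁, b, ⟨j, hj, c, ⟨n₁, hn₁, rfl⟩, rfl⟩, rfl⟩
        apply subset_cSpan
        refine ⟨adjoint m ∘L m₁, ?_, j ∘L (adjoint n₁ ∘L n),
          ⟨j, hj, adjoint n₁ ∘L n, ?_, rfl⟩, ?_⟩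
        · rw [hA]
          exact subset_cSpan _ ⟨adjoint m, ⟨m, hm, rfl⟩, m₁, hm₁, rfl⟩
        · rw [hA]
          exact subset_cSpan _ ⟨adjoint n₁, ⟨n₁, hn₁, rfl⟩, n, hn, rfl⟩
        · ext v
          simp
      have h1 := map_cSpan _ hsub x hx
      rw [hJ] at h1
      simpa using h1
    have hmem12 : ∀ m ∈ M, ∀ n ∈ M, adjoint m ∘L (x ∘L n) ∈
        ((J₁ : Set (H →L[ℂ] H)) ∩ (J₂ : Set (H →L[ℂ] H))) :=
      fun m hm n hn => ⟨key J₁ hJ₁ hx1 m hm n hn, key J₂ hJ₂ hx2 m hm n hn⟩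
    have stepB : ∀ u ∈ opMulSet (M : Set (H →L[ℂ] K)) (opAdjSet (M : Set (H →L[ℂ] K))),
        u ∘L x ∈ cSpan (opMulSet (M : Set (H →L[ℂ] K))
          (opMulSet ((J₁ : Set (H →L[ℂ] H)) ∩ (J₂ : Set (H →L[ℂ] H)))
            (opAdjSet (M : Set (H →L[ℂ] K))))) := by
      rintro u ⟨m, hm, c, ⟨n, hn, rfl⟩, rfl⟩
      have hgen : ∀ v ∈ opMulSet (M : Set (H →L[ℂ] K)) (opAdjSet (M : Set (H →L[ℂ] K))),
          ((compL ℂ K K K (m ∘L adjoint n)).comp (compL ℂ K K K x)) v ∈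
            cSpan (opMulSet (M : Set (H →L[ℂ] K))
              (opMulSet ((J₁ : Set (H →L[ℂ] H)) ∩ (J₂ : Set (H →L[ℂ] H)))
                (opAdjSet (M : Set (H →L[ℂ] K))))) := by
        rintro v ⟨p, hp, d, ⟨q, hq, rfl⟩, rfl⟩
        apply subset_cSpan
        refine ⟨m, hm, (adjoint n ∘L (x ∘L p)) ∘L adjoint q,
          ⟨adjoint n ∘L (x ∘L p), hmem12 n hn p hp, adjoint q, ⟨q, hq, rfl⟩, rfl⟩, ?_⟩
        ext v
        simp
      have h1 := map_cSpan _ hgen 1 hunit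
      simpa [ContinuousLinearMap.one_def] using h1
    have stepC := map_cSpan ((compL ℂ K K K).flip x) (fun u hu => by simpa using stepB u hu)
      1 hunit
    simpa [ContinuousLinearMap.one_def] using stepC
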